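/- For every ε ∈ F with ε ≠ 0, the element h(ε)·w lies in the product set U · U⁻ · U. -/

import Mathlib

open Matrix Pointwise

/-- The Suzuki unipotent `x₊(t,u)` as a 4×4 matrix. -/
def suzXp {F : Type*} [Field F] (θ : ℕ) (t u : F) : Matrix (Fin 4) (Fin 4) F :=
  !![1, t ^ θ, u, t ^ (2 * θ + 1) + t ^ θ * u + u ^ (2 * θ);
     0, 1, t, t ^ (θ + 1) + u;
     0, 0, 1, t ^ θ;
     0, 0, 0, 1]

/-- The antidiagonal permutation matrix `w` (1-indexed: entry 1 iff i+j = 5). -/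
def suzW {F : Type*} [Field F] : Matrix (Fin 4) (Fin 4) F :=
  Matrix.of fun i j => if (i : ℕ) + (j : ℕ) = 3 then 1 else 0

/-- The torus element `h(ε) = diag(ε, ε^{2θ-1}, ε^{1-2θ}, ε⁻¹)`. -/
def suzH {F : Type*} [Field F] (θ : ℕ) (ε : F) : Matrix (Fin 4) (Fin 4) F :=
  Matrix.diagonal ![ε, ε ^ (2 * (θ : ℤ) - 1), ε ^ (1 - 2 * (θ : ℤ)), ε⁻¹]

/-- The opposite unipotent `x₋(t,u) = w·x₊(t,u)·w`. -/
def suzXm {F : Type*} [Field F] (θ : ℕ) (t u : F) : Matrix (Fin 4) (Fin 4) F :=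
  suzW * suzXp θ t u * suzW

/-- `U = {x₊(t,u)}` viewed as a subset of `GL(4,F)`. -/
def suzU (F : Type*) [Field F] (θ : ℕ) : Set (GL (Fin 4) F) :=
  {g | ∃ t u : F, (↑g : Matrix (Fin 4) (Fin 4) F) = suzXp θ t u}

/-- `U⁻ = {x₋(t,u)}` viewed as a subset of `GL(4,F)`. -/
def suzUm (F : Type*) [Field F] (θ : ℕ) : Set (GL (Fin 4) F) :=
  {g | ∃ t u : F, (↑g : Matrix (Fin 4) (Fin 4) F) = suzXm θ t u}

section SuzAux

variable {α : Type*}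

theorem suz_mat4_eq {a₀₀ a₀₁ a₀₂ a₀₃ a₁₀ a₁₁ a₁₂ a₁₃ a₂₀ a₂₁ a₂₂ a₂₃ a₃₀ a₃₁ a₃₂ a₃₃
    b₀₀ b₀₁ b₀₂ b₀₃ b₁₀ b₁₁ b₁₂ b₁₃ b₂₀ b₂₁ b₂₂ b₂₃ b₃₀ b₃₁ b₃₂ b₃₃ : α}
    (h₀₀ : a₀₀ = b₀₀) (h₀₁ : a₀₁ = b₀₁) (h₀₂ : a₀₂ = b₀₂) (h₀₃ : a₀₃ = b₀₃)
    (h₁₀ : a₁₀ = b₁₀) (h₁₁ : a₁₁ = b₁₁) (h₁₂ : a₁₂ = b₁₂) (h₁₃ : a₁₃ = b₁₃)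
    (h₂₀ : a₂₀ = b₂₀) (h₂₁ : a₂₁ = b₂₁) (h₂₂ : a₂₂ = b₂₂) (h₂₃ : a₂₃ = b₂₃)
    (h₃₀ : a₃₀ = b₃₀) (h₃₁ : a₃₁ = b₃₁) (h₃₂ : a₃₂ = b₃₂) (h₃₃ : a₃₃ = b₃₃) :
    !![a₀₀, a₀₁, a₀₂, a₀₃; a₁₀, a₁₁, a₁₂, a₁₃; a₂₀, a₂₁, a₂₂, a₂₃; a₃₀, a₃₁, a₃₂, a₃₃] =
    !![b₀₀, b₀₁, b₀₂, b₀₃; b₁₀, b₁₁, b₁₂, b₁₃; b₂₀, b₂₁, b₂₂, b₂₃; b₃₀, b₃₁, b₃₂, b₃₃] := by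
  subst_vars; rfl

theorem suz_mul_fin_four [AddCommMonoid α] [Mul α]
    (a₀₀ a₀₁ a₀₂ a₀₃ a₁₀ a₁₁ a₁₂ a₁₃ a₂₀ a₂₁ a₂₂ a₂₃ a₃₀ a₃₁ a₃₂ a₃₃
     b₀₀ b₀₁ b₀₂ b₀₃ b₁₀ b₁₁ b₁₂ b₁₃ b₂₀ b₂₁ b₂₂ b₂₃ b₃₀ b₃₁ b₃₂ b₃₃ : α) :
    !![a₀₀, a₀₁, a₀₂, a₀₃; a₁₀, a₁₁, a₁₂, a₁₃; a₂₀, a₂₁, a₂₂, a₂₃; a₃₀, a₃₁, a₃₂, a₃₃] *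
    !![b₀₀, b₀₁, b₀₂, b₀₃; b₁₀, b₁₁, b₁₂, b₁₃; b₂₀, b₂₁, b₂₂, b₂₃; b₃₀, b₃₁, b₃₂, b₃₃] =
    !![a₀₀*b₀₀ + a₀₁*b₁₀ + a₀₂*b₂₀ + a₀₃*b₃₀, a₀₀*b₀₁ + a₀₁*b₁₁ + a₀₂*b₂₁ + a₀₃*b₃₁,
       a₀₀*b₀₂ + a₀₁*b₁₂ + a₀₂*b₂₂ + a₀₃*b₃₂, a₀₀*b₀₃ + a₀₁*b₁₃ + a₀₂*b₂₃ + a₀₃*b₃₃;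
       a₁₀*b₀₀ + a₁₁*b₁₀ + a₁₂*b₂₀ + a₁₃*b₃₀, a₁₀*b₀₁ + a₁₁*b₁₁ + a₁₂*b₂₁ + a₁₃*b₃₁,
       a₁₀*b₀₂ + a₁₁*b₁₂ + a₁₂*b₂₂ + a₁₃*b₃₂, a₁₀*b₀₃ + a₁₁*b₁₃ + a₁₂*b₂₃ + a₁₃*b₃₃;
       a₂₀*b₀₀ + a₂₁*b₁₀ + a₂₂*b₂₀ + a₂₃*b₃₀, a₂₀*b₀₁ + a₂₁*b₁₁ + a₂₂*b₂₁ + a₂₃*b₃₁,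
       a₂₀*b₀₂ + a₂₁*b₁₂ + a₂₂*b₂₂ + a₂₃*b₃₂, a₂₀*b₀₃ + a₂₁*b₁₃ + a₂₂*b₂₃ + a₂₃*b₃₃;
       a₃₀*b₀₀ + a₃₁*b₁₀ + a₃₂*b₂₀ + a₃₃*b₃₀, a₃₀*b₀₁ + a₃₁*b₁₁ + a₃₂*b₂₁ + a₃₃*b₃₁,
       a₃₀*b₀₂ + a₃₁*b₁₂ + a₃₂*b₂₂ + a₃₃*b₃₂, a₃₀*b₀₃ + a₃₁*b₁₃ + a₃₂*b₂₃ + a₃₃*b₃₃] := by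
  ext i j
  fin_cases i <;> fin_cases j <;>
    simp [Matrix.mul_apply, Fin.sum_univ_succ, ← add_assoc]

theorem suz_one_fin_four [Zero α] [One α] :
    (1 : Matrix (Fin 4) (Fin 4) α) = !![1,0,0,0; 0,1,0,0; 0,0,1,0; 0,0,0,1] := by
  ext i j
  fin_cases i <;> fin_cases j <;> simp [Matrix.one_apply, Matrix.vecHead, Matrix.vecTail]

theorem suz_diag4 [Zero α] (w x y z : α) :
    Matrix.diagonal ![w, x, y, z] =
      !![w,0,0,0; 0,x,0,0; 0,0,y,0; 0,0,0,z] := by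
  ext i j
  fin_cases i <;> fin_cases j <;>
    simp [Matrix.diagonal, Matrix.vecHead, Matrix.vecTail]

theorem suzW_eq {F : Type*} [Field F] :
    (suzW : Matrix (Fin 4) (Fin 4) F) = !![0,0,0,1; 0,0,1,0; 0,1,0,0; 1,0,0,0] := by
  ext i j
  fin_cases i <;> fin_cases j <;> rfl

/-- The central rational-function identity, valid over any field. -/
theorem suz_key {F : Type*} [Field F] (e a : F) (he : e ≠ 0) (ha : a ≠ 0) :
    (!![1,0,a,e; 0,1,0,a; 0,0,1,0; 0,0,0,1] : Matrix (Fin 4) (Fin 4) F) *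
      !![1,0,0,0; a*e⁻¹,1,0,0; 0, e*(a^2)⁻¹,1,0; -e⁻¹, -a⁻¹, -(a*e⁻¹), 1] *
      !![1, -(e*a⁻¹), 0, e; 0,1, -(a^2*e⁻¹), -a; 0,0,1, e*a⁻¹; 0,0,0,1]
    = !![0,0,0,e; 0,0,-(a^2*e⁻¹),0; 0, e*(a^2)⁻¹,0,0; -e⁻¹,0,0,0] := by
  rw [suz_mul_fin_four, suz_mul_fin_four]
  apply suz_mat4_eq <;> field_simp <;> (first | ring1 | (left; ring1))

end SuzAux

theorem suzuki_hw_mem_UUmU (m θ : ℕ) (hθ : θ = 2 ^ m)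
    (F : Type*) [Field F] [Fintype F] (hF : Fintype.card F = 2 ^ (2 * m + 1))
    (ε : F) (hε : ε ≠ 0) (g : GL (Fin 4) F)
    (hg : (↑g : Matrix (Fin 4) (Fin 4) F) = suzH θ ε * suzW) :
    g ∈ suzU F θ * suzUm F θ * suzU F θ := by
  -- characteristic 2
  have hchar : (2 : F) = 0 := by
    have hcp := ringChar.charP F
    obtain ⟨n, hp, hcard⟩ := FiniteField.card F (ringChar F)
    have hdvd : ringChar F ∣ 2 ^ (2 * m + 1) := by
      rw [← hF, hcard]
      exact dvd_pow_self _ (by positivity)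
    have h2 : ringChar F = 2 :=
      (Nat.prime_dvd_prime_iff_eq hp Nat.prime_two).mp (hp.dvd_of_dvd_pow hdvd)
    have := CharP.cast_eq_zero F (ringChar F)
    rw [h2] at this
    exact_mod_cast this
  have hneg : ∀ x : F, -x = x := fun x =>
    neg_eq_of_add_eq_zero_left (by rw [← two_mul, hchar, zero_mul])
  have hθ0 : θ ≠ 0 := by subst hθ; positivity
  obtain ⟨a, ha_def⟩ : ∃ x : F, x = ε ^ θ := ⟨_, rfl⟩
  have ha : a ≠ 0 := ha_def ▸ pow_ne_zero _ hε
  have hεθ : ε ^ θ = a := ha_def.symm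
  have hq : a ^ (2 * θ) = ε := by
    rw [ha_def, ← pow_mul, show θ * (2 * θ) = 2 ^ (2 * m + 1) by
      subst hθ; rw [show 2 * m + 1 = m + (m + 1) by omega, pow_add, pow_succ]; ring, ← hF]
    exact FiniteField.pow_card ε
  obtain ⟨t2, ht2_def⟩ : ∃ x : F, x = ε * (a ^ 2)⁻¹ := ⟨_, rfl⟩
  obtain ⟨u2, hu2_def⟩ : ∃ x : F, x = a⁻¹ := ⟨_, rfl⟩
  obtain ⟨t3, ht3_def⟩ : ∃ x : F, x = a ^ 2 * ε⁻¹ := ⟨_, rfl⟩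
  -- power computations
  have ht2θ : t2 ^ θ = a * ε⁻¹ := by
    rw [ht2_def, mul_pow, hεθ, inv_pow, ← pow_mul, hq]
  have ht3θ : t3 ^ θ = ε * a⁻¹ := by
    rw [ht3_def, mul_pow, ← pow_mul, hq, inv_pow, hεθ]
  have ht2a : t2 ^ (2 * θ + 1) = ε⁻¹ := by
    rw [pow_succ, pow_mul', ht2θ, ht2_def]; field_simp
  have ht2b : t2 ^ (θ + 1) = a⁻¹ := by
    rw [pow_succ, ht2θ, ht2_def]; field_simp
  have ht3a : t3 ^ (2 * θ + 1) = ε := by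
    rw [pow_succ, pow_mul', ht3θ, ht3_def]; field_simp
  have ht3b : t3 ^ (θ + 1) = a := by
    rw [pow_succ, ht3θ, ht3_def]; field_simp
  have hu2a : u2 ^ (2 * θ) = ε⁻¹ := by rw [hu2_def, inv_pow, hq]
  -- the three factors as concrete matrices
  have hXp1 : suzXp θ 0 a = !![1,0,a,ε; 0,1,0,a; 0,0,1,0; 0,0,0,1] := by
    simp only [suzXp]
    apply suz_mat4_eq
    case h₀₁ => exact zero_pow hθ0
    case h₀₃ =>
      rw [zero_pow (by omega : 2 * θ + 1 ≠ 0), zero_pow hθ0, zero_mul, zero_add,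
        zero_add, hq]
    case h₁₃ => rw [zero_pow (by omega : θ + 1 ≠ 0), zero_add]
    case h₂₃ => exact zero_pow hθ0
    all_goals rfl
  have hXp2 : suzXp θ t2 u2 =
      !![1, -(a*ε⁻¹), -u2, -ε⁻¹; 0,1, t2, 0; 0,0,1, a*ε⁻¹; 0,0,0,1] := by
    simp only [suzXp]
    apply suz_mat4_eq
    case h₀₁ => rw [hneg]; exact ht2θ
    case h₀₂ => rw [hneg]
    case h₀₃ =>
      rw [hneg]
      have hc : a * ε⁻¹ * u2 = ε⁻¹ := by rw [hu2_def]; field_simp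
      rw [ht2a, ht2θ, hu2a, hc, add_assoc, ← two_mul, hchar, zero_mul, add_zero]
    case h₁₃ => rw [ht2b, hu2_def, ← two_mul, hchar, zero_mul]
    case h₂₃ => exact ht2θ
    all_goals rfl
  have hXp3 : suzXp θ t3 0 =
      !![1, -(ε*a⁻¹), 0, ε; 0,1, -t3, -a; 0,0,1, ε*a⁻¹; 0,0,0,1] := by
    simp only [suzXp]
    apply suz_mat4_eq
    case h₀₁ => rw [hneg]; exact ht3θ
    case h₀₃ =>
      rw [mul_zero, add_zero, zero_pow (by omega : 2 * θ ≠ 0), add_zero]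
      exact ht3a
    case h₁₂ => rw [hneg]
    case h₁₃ => rw [hneg, add_zero]; exact ht3b
    case h₂₃ => exact ht3θ
    all_goals rfl
  have hXm : suzXm θ t2 u2 =
      !![1,0,0,0; a*ε⁻¹,1,0,0; 0, t2,1,0; -ε⁻¹, -u2, -(a*ε⁻¹), 1] := by
    rw [suzXm, hXp2, suzW_eq, suz_mul_fin_four, suz_mul_fin_four]
    apply suz_mat4_eq <;> ring
  have hHW : suzH θ ε * suzW =
      !![0,0,0,ε; 0,0,-(a^2*ε⁻¹),0; 0, ε*(a^2)⁻¹,0,0; -ε⁻¹,0,0,0] := by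
    have hz1 : ε ^ (2 * (θ : ℤ) - 1) = a ^ 2 * ε⁻¹ := by
      rw [show 2 * (θ : ℤ) - 1 = ((2 * θ : ℕ) : ℤ) + (-1) by push_cast; ring,
        zpow_add₀ hε, zpow_natCast, _root_.zpow_neg_one, pow_mul', hεθ]
    have hz2 : ε ^ (1 - 2 * (θ : ℤ)) = ε * (a ^ 2)⁻¹ := by
      rw [show 1 - 2 * (θ : ℤ) = (1 : ℤ) + (-((2 * θ : ℕ) : ℤ)) by push_cast; ring,
        zpow_add₀ hε, zpow_one, _root_.zpow_neg, zpow_natCast, pow_mul', hεθ]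
    rw [suzH, suz_diag4, hz1, hz2, suzW_eq, suz_mul_fin_four]
    apply suz_mat4_eq <;> (first | ring1 | (rw [hneg]; try ring1))
  -- invertibility: explicit inverses
  have hu1a : suzXp θ 0 a * !![1,0,-a,-ε; 0,1,0,-a; 0,0,1,0; 0,0,0,1] = 1 := by
    rw [hXp1, suz_mul_fin_four, suz_one_fin_four]
    apply suz_mat4_eq <;> ring
  have hu1b : !![1,0,-a,-ε; 0,1,0,-a; 0,0,1,0; 0,0,0,1] * suzXp θ 0 a = 1 := by
    rw [hXp1, suz_mul_fin_four, suz_one_fin_four]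
    apply suz_mat4_eq <;> ring
  have hu2inv1 : suzXm θ t2 u2 *
      !![1,0,0,0; -(ε⁻¹*a),1,0,0; u2, -t2,1,0; ε⁻¹, 0, ε⁻¹*a, 1] = 1 := by
    rw [hXm, suz_mul_fin_four, suz_one_fin_four, ht2_def, hu2_def]
    apply suz_mat4_eq <;> field_simp <;> try ring
  have hu2inv2 : !![1,0,0,0; -(ε⁻¹*a),1,0,0; u2, -t2,1,0; ε⁻¹, 0, ε⁻¹*a, 1] *
      suzXm θ t2 u2 = 1 := by
    rw [hXm, suz_mul_fin_four, suz_one_fin_four, ht2_def, hu2_def]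
    apply suz_mat4_eq <;> field_simp <;> try ring
  have hu3a : suzXp θ t3 0 *
      !![1, ε*a⁻¹, a, -ε; 0,1, ε⁻¹*a^2, 0; 0,0,1, -(ε*a⁻¹); 0,0,0,1] = 1 := by
    rw [hXp3, suz_mul_fin_four, suz_one_fin_four, ht3_def]
    apply suz_mat4_eq <;> field_simp <;> try ring
  have hu3b : !![1, ε*a⁻¹, a, -ε; 0,1, ε⁻¹*a^2, 0; 0,0,1, -(ε*a⁻¹); 0,0,0,1] *
      suzXp θ t3 0 = 1 := by
    rw [hXp3, suz_mul_fin_four, suz_one_fin_four, ht3_def]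
    apply suz_mat4_eq <;> field_simp <;> try ring
  let U1 : GL (Fin 4) F := ⟨suzXp θ 0 a, _, hu1a, hu1b⟩
  let U2 : GL (Fin 4) F := ⟨suzXm θ t2 u2, _, hu2inv1, hu2inv2⟩
  let U3 : GL (Fin 4) F := ⟨suzXp θ t3 0, _, hu3a, hu3b⟩
  have hprod : g = U1 * U2 * U3 := by
    apply Units.ext
    show (↑g : Matrix (Fin 4) (Fin 4) F) = suzXp θ 0 a * suzXm θ t2 u2 * suzXp θ t3 0
    rw [hg, hXp1, hXm, hXp3, hHW, ht2_def, hu2_def, ht3_def]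
    exact (suz_key ε a hε ha).symm
  rw [hprod]
  exact Set.mul_mem_mul (Set.mul_mem_mul ⟨0, a, rfl⟩ ⟨t2, u2, rfl⟩) ⟨t3, 0, rfl⟩
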